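/- For |p⟩ = Σᵢ √pᵢ |i⟩ with {pᵢ} a probability distribution, the largest eigenvalue of the operator |p⟩⟨p| − Σᵢ pᵢ|i⟩⟨i| equals the unique nonnegative c satisfying Σᵢ pᵢ/(c + pᵢ) = 1 (where we take c = 0 when the distribution is deterministic). -/

import Mathlib

open Matrix BigOperators
open scoped ComplexOrder

/-- for `|p⟩ = Σᵢ √pᵢ |i⟩`, the largest eigenvalue of
`|p⟩⟨p| − Σᵢ pᵢ|i⟩⟨i|` equals the unique nonnegative `c` with `Σᵢ pᵢ/(c + pᵢ) = 1`. -/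
theorem largest_eigenvalue_eq_c {d : ℕ}
    (p : Fin d → ℝ) (hp0 : ∀ i, 0 ≤ p i) (hp1 : ∑ i, p i = 1)
    (c : ℝ) (hc0 : 0 ≤ c) (hc : ∑ i, p i / (c + p i) = 1)
    (M : Matrix (Fin d) (Fin d) ℂ)
    (hM : M = Matrix.vecMulVec (fun i => (Real.sqrt (p i) : ℂ))
                (fun i => (Real.sqrt (p i) : ℂ)) -
              Matrix.diagonal (fun i => (p i : ℂ)))
    (hHerm : M.IsHermitian) :
    (⨆ i, hHerm.eigenvalues i) = c := by
  -- basic facts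
  have hd : d ≠ 0 := by
    rintro rfl
    simp at hp1
  haveI : Nonempty (Fin d) := Fin.pos_iff_nonempty.mp (Nat.pos_of_ne_zero hd)
  obtain ⟨i0, hi0⟩ : ∃ i, 0 < p i := by
    by_contra h
    push_neg at h
    have : ∑ i, p i = 0 := Finset.sum_eq_zero fun i _ => le_antisymm (h i) (hp0 i)
    rw [this] at hp1; norm_num at hp1
  -- mulVec formula
  have hMv : ∀ (v : Fin d → ℂ) (i : Fin d),
      (M *ᵥ v) i = (Real.sqrt (p i) : ℂ) * (∑ j, (Real.sqrt (p j) : ℂ) * v j)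
        - (p i : ℂ) * v i := by
    intro v i
    subst hM
    simp [Matrix.mulVec, dotProduct, Matrix.vecMulVec, Matrix.sub_apply,
      Matrix.diagonal, sub_mul, Finset.sum_sub_distrib, Finset.mul_sum, ite_mul,
      mul_assoc]
  -- Part 1: every eigenvalue is ≤ c
  have hub : ∀ k, hHerm.eigenvalues k ≤ c := by
    intro k
    by_contra hlt
    push_neg at hlt
    set μ := hHerm.eigenvalues k with hμ
    have hμ0 : 0 < μ := lt_of_le_of_lt hc0 hlt
    set v : Fin d → ℂ := ⇑(hHerm.eigenvectorBasis k) with hv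
    have hvne : v ≠ 0 := by
      intro h
      apply hHerm.eigenvectorBasis.orthonormal.ne_zero k
      apply PiLp.ext
      intro i
      exact congrFun h i
    have heig := hHerm.mulVec_eigenvectorBasis k
    set s : ℂ := ∑ j, (Real.sqrt (p j) : ℂ) * v j with hs
    have hpos : ∀ i, (0:ℝ) < μ + p i := fun i => by have := hp0 i; linarith
    have hne : ∀ i, ((μ + p i : ℝ) : ℂ) ≠ 0 :=
      fun i => Complex.ofReal_ne_zero.mpr (ne_of_gt (hpos i))
    have hvi : ∀ i, v i = (Real.sqrt (p i) : ℂ) * s / ((μ + p i : ℝ) : ℂ) := by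
      intro i
      have h1 : (M *ᵥ v) i = (μ : ℂ) * v i := by
        rw [heig]
        simp only [Pi.smul_apply, Complex.real_smul]
        rfl
      rw [hMv v i, ← hs] at h1
      rw [eq_div_iff (hne i)]
      push_cast
      linear_combination -h1
    have hsne : s ≠ 0 := by
      intro h0
      apply hvne
      funext i
      rw [hvi i, h0, mul_zero, zero_div]
      rfl
    have hsum : (∑ i, ((p i / (μ + p i) : ℝ) : ℂ)) * s = s := by
      calc (∑ i, ((p i / (μ + p i) : ℝ) : ℂ)) * s
          = ∑ i, (Real.sqrt (p i) : ℂ) * v i := by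
            rw [Finset.sum_mul]
            refine Finset.sum_congr rfl fun i _ => ?_
            rw [hvi i]
            have hq : (Real.sqrt (p i) : ℂ) * (Real.sqrt (p i) : ℂ) = (p i : ℂ) := by
              rw [← Complex.ofReal_mul, Real.mul_self_sqrt (hp0 i)]
            have hne' : ((μ : ℂ) + (p i : ℂ)) ≠ 0 := by
              have := hne i; push_cast at this; exact this
            rw [Complex.ofReal_div]
            push_cast
            field_simp
            linear_combination (-1 : ℂ) * hq
        _ = s := hs.symm
    have hsum1 : ∑ i, p i / (μ + p i) = 1 := by
      have := mul_right_cancel₀ hsne (hsum.trans (one_mul s).symm)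
      have h2 : ((∑ i, p i / (μ + p i) : ℝ) : ℂ) = ((1 : ℝ) : ℂ) := by
        push_cast
        simpa using this
      exact_mod_cast h2
    -- contradiction with strict monotonicity
    have hstrict : ∑ i, p i / (μ + p i) < ∑ i, p i / (c + p i) := by
      apply Finset.sum_lt_sum
      · intro i _
        rcases eq_or_lt_of_le (hp0 i) with h | h
        · rw [← h]; simp
        · apply div_le_div_of_nonneg_left (hp0 i) (by positivity)
          linarith
      · refine ⟨i0, Finset.mem_univ _, ?_⟩
        apply div_lt_div_of_pos_left hi0 (by positivity)
        linarith
    rw [hsum1, hc] at hstrict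
    exact lt_irrefl 1 hstrict
  -- Part 2: c is an eigenvalue
  set w : Fin d → ℂ := fun i => ((Real.sqrt (p i) / (c + p i) : ℝ) : ℂ) with hw
  have hwsum : ∑ j, (Real.sqrt (p j) : ℂ) * w j = 1 := by
    have : ∀ j, (Real.sqrt (p j) : ℂ) * w j = ((p j / (c + p j) : ℝ) : ℂ) := by
      intro j
      rw [hw]
      rcases eq_or_lt_of_le (hp0 j) with h | h
      · rcases eq_or_lt_of_le hc0 with h2 | h2
        · rw [← h, ← h2]; simp
        · rw [← h]; simp
      · have hne : c + p j ≠ 0 := by positivity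
        push_cast
        have hq : (Real.sqrt (p j) : ℂ) * (Real.sqrt (p j) : ℂ) = (p j : ℂ) := by
          rw [← Complex.ofReal_mul, Real.mul_self_sqrt (hp0 j)]
        have hne' : ((c : ℂ) + (p j : ℂ)) ≠ 0 := by exact_mod_cast hne
        field_simp
        linear_combination hq
    rw [Finset.sum_congr rfl fun j _ => this j]
    rw [← Complex.ofReal_sum]
    rw [hc]
    norm_num
  have hweig : M *ᵥ w = (c : ℂ) • w := by
    funext i
    rw [hMv w i, hwsum, mul_one]
    rw [hw]
    simp only [Pi.smul_apply, smul_eq_mul]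
    rcases eq_or_lt_of_le (hp0 i) with h | h
    · rcases eq_or_lt_of_le hc0 with h2 | h2
      · rw [← h, ← h2]; simp
      · rw [← h]; simp
    · have hne : c + p i ≠ 0 := by positivity
      push_cast
      have hne' : ((c : ℂ) + (p i : ℂ)) ≠ 0 := by exact_mod_cast hne
      field_simp
      ring
  have hwne : w ≠ 0 := by
    intro h0
    have : w i0 = 0 := congrFun h0 i0
    rw [hw] at this
    simp only [Complex.ofReal_eq_zero] at this
    have h1 : 0 < Real.sqrt (p i0) / (c + p i0) := by positivity
    rw [this] at h1
    exact lt_irrefl 0 h1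
  have hcs : (c : ℂ) ∈ spectrum ℂ M := by
    rw [← AlgEquiv.spectrum_eq (Matrix.toLinAlgEquiv' (R := ℂ) (n := Fin d)),
      ← Module.End.hasEigenvalue_iff_mem_spectrum]
    refine Module.End.hasEigenvalue_of_hasEigenvector
      (⟨Module.End.mem_eigenspace_iff.mpr ?_, hwne⟩ : Module.End.HasEigenvector _ _ w)
    simpa [Matrix.toLinAlgEquiv'_apply, Matrix.toLin'_apply] using hweig
  have hcr : c ∈ spectrum ℝ M := spectrum.of_algebraMap_mem ℂ hcs
  rw [hHerm.spectrum_real_eq_range_eigenvalues] at hcr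
  obtain ⟨k0, hk0⟩ := hcr
  -- conclude
  apply le_antisymm
  · exact ciSup_le hub
  · rw [← hk0]
    exact le_ciSup (Set.Finite.bddAbove (Set.finite_range _)) k0
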